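/- For every integer k ∈ Z there exist constants C > 0 and μ, ν ≥ 0 such that for all real numbers a, b ≥ 1, ∫_0^∞ e^{-ay - b/y} y^{k-1} dy ≤ C a^μ b^ν e^{-√(ab)}. -/

import Mathlib

set_option autoImplicit false

open MeasureTheory Real

private lemma exp_neg_mul_pow_le {x : ℝ} (hx : 0 ≤ x) (n : ℕ) :
    Real.exp (-x) * x ^ n ≤ n.factorial := by
  have h := Real.pow_div_factorial_le_exp x hx n
  have hfac : (0:ℝ) < n.factorial := by positivity
  calc Real.exp (-x) * x ^ n ≤ Real.exp (-x) * (n.factorial * Real.exp x) := by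
        gcongr
        rw [div_le_iff₀ hfac] at h
        linarith [h]
      _ = n.factorial * (Real.exp (-x) * Real.exp x) := by ring
      _ = n.factorial := by rw [← Real.exp_add]; simp

private lemma aux_meas (k : ℤ) :
    Measurable (fun y : ℝ => Real.exp (-(y + 1/y)/2) * y ^ (k - 1)) := by
  apply Measurable.mul
  · exact (measurable_id.add (measurable_const.div measurable_id)).neg.div_const 2
      |>.exp
  · cases h : (k - 1) with
    | ofNat p =>
        simpa [h, zpow_natCast] using
          (measurable_id.pow_const p : Measurable fun y : ℝ => y ^ p)
    | negSucc p =>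
        simpa [h, zpow_negSucc] using
          (measurable_id.pow_const (p+1) : Measurable fun y : ℝ => y ^ (p+1))

private lemma aux_integrable (k : ℤ) :
    IntegrableOn (fun y : ℝ => Real.exp (-(y + 1/y)/2) * y ^ (k - 1)) (Set.Ioi 0) := by
  rw [← Set.Ioc_union_Ioi_eq_Ioi (by norm_num : (0:ℝ) ≤ 1)]
  apply IntegrableOn.union
  · -- on (0,1]: bounded by constant
    set n : ℕ := (1 - k).toNat with hn
    have hnk : (1 : ℤ) - k ≤ (n : ℤ) := Int.self_le_toNat _
    apply Integrable.mono' (g := fun _ => (n.factorial : ℝ) * 2 ^ n)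
      (integrableOn_const measure_Ioc_lt_top.ne)
      (aux_meas k).aestronglyMeasurable
    filter_upwards [ae_restrict_mem measurableSet_Ioc] with y hy
    obtain ⟨hy0, hy1⟩ := hy
    have hyne : y ≠ 0 := ne_of_gt hy0
    have h2y : (0:ℝ) < 2 * y := by linarith
    have hz : (0:ℝ) ≤ y ^ (k - 1) := le_of_lt (zpow_pos hy0 _)
    rw [Real.norm_of_nonneg (by positivity)]
    have step1 : Real.exp (-(y + 1/y)/2) ≤ Real.exp (-(1/(2*y))) := by
      apply Real.exp_le_exp.2
      have h1y : 0 < 1/y := by positivity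
      rw [neg_div]
      have : 1/(2*y) ≤ (y + 1/y)/2 := by
        rw [div_le_div_iff₀ h2y (by norm_num : (0:ℝ) < 2)]
        have : 1/y * y = 1 := div_mul_cancel₀ 1 hyne
        nlinarith [sq_nonneg y]
      linarith
    have step2 : Real.exp (-(1/(2*y))) ≤ n.factorial * (2*y) ^ n := by
      have h := exp_neg_mul_pow_le (x := 1/(2*y)) (by positivity) n
      have hpow : (0:ℝ) < (2*y)^n := by positivity
      have hone : (1/(2*y))^n * (2*y)^n = 1 := by
        rw [one_div, inv_pow, inv_mul_cancel₀ (ne_of_gt hpow)]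
      calc Real.exp (-(1/(2*y)))
          = Real.exp (-(1/(2*y))) * ((1/(2*y))^n * (2*y)^n) := by rw [hone, mul_one]
        _ = (Real.exp (-(1/(2*y))) * (1/(2*y))^n) * (2*y)^n := by ring
        _ ≤ n.factorial * (2*y)^n := by gcongr
    calc Real.exp (-(y + 1/y)/2) * y ^ (k - 1)
        ≤ (n.factorial * (2*y)^n) * y ^ (k - 1) := by
          gcongr
          exact le_trans step1 step2
      _ = n.factorial * 2^n * (y^(n:ℤ) * y^(k-1)) := by
          rw [mul_pow, zpow_natCast]; ring
      _ = n.factorial * 2^n * y^((n:ℤ) + (k-1)) := by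
          rw [zpow_add₀ hyne]
      _ ≤ n.factorial * 2^n * 1 := by
          have hle : y^((n:ℤ) + (k-1)) ≤ 1 := by
            obtain ⟨p, hp⟩ := Int.eq_ofNat_of_zero_le (by omega : (0:ℤ) ≤ (n:ℤ) + (k-1))
            rw [hp, zpow_natCast]
            exact pow_le_one₀ hy0.le hy1
          exact mul_le_mul_of_nonneg_left hle (by positivity)
      _ = n.factorial * 2^n := by rw [mul_one]
  · -- on (1,∞): bounded by M * exp(-y/4)
    set m : ℕ := (k - 1).toNat with hm
    have hkm : k - 1 ≤ (m : ℤ) := Int.self_le_toNat _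
    apply Integrable.mono'
      (g := fun y => (m.factorial * 4 ^ m : ℝ) * Real.exp (-(1/4) * y))
      ((exp_neg_integrableOn_Ioi 1 (by norm_num : (0:ℝ) < 1/4)).const_mul _)
      (aux_meas k).aestronglyMeasurable
    filter_upwards [ae_restrict_mem measurableSet_Ioi] with y hy
    have hy1 : (1:ℝ) < y := hy
    have hy0 : (0:ℝ) < y := lt_trans one_pos hy1
    rw [Real.norm_of_nonneg (by positivity)]
    have step1 : Real.exp (-(y + 1/y)/2) ≤ Real.exp (-(y/2)) := by
      apply Real.exp_le_exp.2
      have : 0 ≤ 1/y := by positivity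
      rw [neg_div]
      linarith
    have step2 : y ^ (k-1) ≤ y ^ (m:ℤ) := zpow_le_zpow_right₀ hy1.le hkm
    have step3 : Real.exp (-(y/2)) * y ^ m ≤ Real.exp (-(1/4) * y) * (m.factorial * 4^m) := by
      have h := exp_neg_mul_pow_le (x := y/4) (by positivity) m
      have hid : (y/4 * 4 : ℝ) = y := by ring
      calc Real.exp (-(y/2)) * y ^ m
          = Real.exp (-(1/4) * y) * (Real.exp (-(y/4)) * (y/4)^m) * 4^m := by
            have he : Real.exp (-(y/2)) = Real.exp (-(1/4)*y) * Real.exp (-(y/4)) := by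
              rw [← Real.exp_add]; congr 1; ring
            have hp : (y:ℝ)^m = (y/4)^m * 4^m := by
              rw [← mul_pow, hid]
            rw [he, hp]; ring
        _ ≤ Real.exp (-(1/4) * y) * m.factorial * 4^m := by
            gcongr
        _ = Real.exp (-(1/4) * y) * (m.factorial * 4^m) := by ring
    calc Real.exp (-(y + 1/y)/2) * y ^ (k - 1)
        ≤ Real.exp (-(y/2)) * y ^ (m:ℤ) := by
          apply mul_le_mul step1 step2 (le_of_lt (zpow_pos hy0 _)) (Real.exp_nonneg _)
      _ = Real.exp (-(y/2)) * y ^ m := by rw [zpow_natCast]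
      _ ≤ Real.exp (-(1/4) * y) * (m.factorial * 4^m) := step3
      _ = (m.factorial * 4 ^ m : ℝ) * Real.exp (-(1/4) * y) := by ring

/-- For every `k ∈ ℤ` there exist `C > 0` and `μ, ν ≥ 0` such that for all `a, b ≥ 1`,
`∫_0^∞ e^{-ay - b/y} y^{k-1} dy ≤ C a^μ b^ν e^{-√(ab)}`. -/
theorem bessel_type_integral_bound (k : ℤ) :
    ∃ C : ℝ, 0 < C ∧ ∃ μ ν : ℝ, 0 ≤ μ ∧ 0 ≤ ν ∧
      ∀ a b : ℝ, 1 ≤ a → 1 ≤ b →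
        ∫ y in Set.Ioi (0 : ℝ), Real.exp (-a * y - b / y) * y ^ (k - 1) ≤
          C * a ^ μ * b ^ ν * Real.exp (-Real.sqrt (a * b)) := by
  set g : ℝ → ℝ := fun y => Real.exp (-(y + 1/y)/2) * y ^ (k - 1) with hg
  set I : ℝ := ∫ y in Set.Ioi (0:ℝ), g y with hI
  have hI0 : 0 ≤ I := by
    apply setIntegral_nonneg measurableSet_Ioi
    intro y hy
    have : (0:ℝ) < y := hy
    positivity
  refine ⟨I + 1, by linarith, 0, 0, le_refl _, le_refl _, ?_⟩
  intro a b ha hb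
  have ha0 : (0:ℝ) < a := lt_of_lt_of_le one_pos ha
  have hb0 : (0:ℝ) < b := lt_of_lt_of_le one_pos hb
  simp only [Real.rpow_zero, mul_one]
  have key : ∫ y in Set.Ioi (0:ℝ), Real.exp (-a * y - b / y) * y ^ (k - 1)
      ≤ ∫ y in Set.Ioi (0:ℝ), Real.exp (-Real.sqrt (a*b)) * g y := by
    apply integral_mono_of_nonneg
    · filter_upwards [ae_restrict_mem measurableSet_Ioi] with y hy
      have hy0 : (0:ℝ) < y := hy
      positivity
    · exact ((aux_integrable k).const_mul _)
    · filter_upwards [ae_restrict_mem measurableSet_Ioi] with y hy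
      have hy0 : (0:ℝ) < y := hy
      have hyne : y ≠ 0 := ne_of_gt hy0
      have hz : (0:ℝ) ≤ y ^ (k - 1) := le_of_lt (zpow_pos hy0 _)
      simp only [hg]
      rw [show Real.exp (-Real.sqrt (a*b)) * (Real.exp (-(y + 1/y)/2) * y^(k-1))
          = Real.exp (-Real.sqrt (a*b) + -(y + 1/y)/2) * y^(k-1) by rw [Real.exp_add]; ring]
      apply mul_le_mul_of_nonneg_right _ hz
      apply Real.exp_le_exp.2
      -- need: -a*y - b/y ≤ -√(ab) + -(y+1/y)/2
      have hamgm : 2 * Real.sqrt (a*b) ≤ a*y + b/y := by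
        have hu : (0:ℝ) ≤ a*y := by positivity
        have hv : (0:ℝ) ≤ b/y := by positivity
        have h2 := two_mul_le_add_sq (Real.sqrt (a*y)) (Real.sqrt (b/y))
        have hprod : Real.sqrt (a*y) * Real.sqrt (b/y) = Real.sqrt (a*b) := by
          rw [← Real.sqrt_mul hu]
          congr 1
          field_simp
        rw [Real.sq_sqrt hu, Real.sq_sqrt hv, mul_assoc, hprod] at h2
        linarith
      have hmono : y + 1/y ≤ a*y + b/y := by
        have h1 : y ≤ a * y := le_mul_of_one_le_left hy0.le ha
        have h2 : 1/y ≤ b/y := by gcongr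
        linarith
      nlinarith
  have key2 : ∫ y in Set.Ioi (0:ℝ), Real.exp (-Real.sqrt (a*b)) * g y
      = Real.exp (-Real.sqrt (a*b)) * I := by
    exact integral_const_mul _ _
  calc ∫ y in Set.Ioi (0:ℝ), Real.exp (-a * y - b / y) * y ^ (k - 1)
      ≤ Real.exp (-Real.sqrt (a*b)) * I := by rw [← key2]; exact key
    _ ≤ (I + 1) * Real.exp (-Real.sqrt (a*b)) := by
        have := Real.exp_pos (-Real.sqrt (a*b))
        nlinarith
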